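/- Let q ∈ ℂ \ {0} with |q| ≠ 1, and let a, b, c be relatively q-prime polynomials over ℂ, not all constants, satisfying a + b = c. Then max{deg(a), deg(b), deg(c)} ≤ deg(rad_q(abc)) - 1. -/

import Mathlib

open Polynomial

noncomputable section

/-- q-number [n]_q = 1 + q + ... + q^{n-1}. -/
def qNum (q : ℂ) (n : ℕ) : ℂ := ∑ i ∈ Finset.range n, q ^ i

/-- q-factorial. -/
def qFact (q : ℂ) (n : ℕ) : ℂ := ∏ i ∈ Finset.range n, qNum q (i + 1)

/-- q-binomial coefficient. -/
def qBinom (q : ℂ) (k j : ℕ) : ℂ := qFact q k / (qFact q j * qFact q (k - j))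

/-- q-derivative of a function. -/
def Dqf (q : ℂ) (f : ℂ → ℂ) : ℂ → ℂ := fun z => (f (q * z) - f z) / (q * z - z)

/-- q-analogue of the power (z-w)^n : [z-w]_q^n = (z-w)(z-qw)...(z-q^{n-1}w). -/
def qPow (q w : ℂ) (n : ℕ) : Polynomial ℂ := ∏ i ∈ Finset.range n, (X - C (q ^ i * w))

/-- q-derivative as a polynomial operation. -/
def qDeriv (q : ℂ) (f : Polynomial ℂ) : Polynomial ℂ :=
  C (q - 1)⁻¹ * ((f.comp (C q * X) - f) /ₘ X)

/-- `w` is a zero of `f` with q-weight `n`. -/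
def IsZeroQWeight (q : ℂ) (f : Polynomial ℂ) (w : ℂ) (n : ℕ) : Prop :=
  (w = 0 ∧ f ≠ 0 ∧ Polynomial.rootMultiplicity 0 f = n) ∨
  (w ≠ 0 ∧ (∀ k < n, f.eval (q ^ k * w) = 0) ∧ f.eval (q ^ n * w) ≠ 0)

/-- Canonical q-chain factorization of a polynomial. -/
structure QFactorization (q : ℂ) (P : Polynomial ℂ) where
  N : ℕ
  z : Fin N → ℂ
  n : Fin N → ℕ
  A : ℂ
  A_ne : A ≠ 0
  n_pos : ∀ j, 1 ≤ n j
  eq : P = Polynomial.C A * ∏ j, qPow q (z j) (n j)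
  deg_sum : ∑ j, n j = P.natDegree
  chain : ∀ j : Fin N,
    IsZeroQWeight q (∏ k ∈ Finset.univ.filter (fun k => j ≤ k), qPow q (z k) (n k)) (z j) (n j)
  maximal : ∀ j : Fin N, z j ≠ 0 →
    (∏ k ∈ Finset.univ.filter (fun k => j ≤ k), qPow q (z k) (n k)).eval (q⁻¹ * z j) ≠ 0

/-- q-difference radical associated to a canonical factorization. -/
def radQ {q : ℂ} {P : Polynomial ℂ} (F : QFactorization q P) : Polynomial ℂ :=
  ∏ j, (X - C (F.z j))

local instance : DecidableEq (Polynomial ℂ) := Classical.decEq _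

/-- Truncated q-radical of level μ. -/
def radTruncQ {q : ℂ} {P : Polynomial ℂ} (F : QFactorization q P) (μ : ℕ) : Polynomial ℂ :=
  EuclideanDomain.gcd (∏ j, qPow q (F.z j) (F.n j)) (∏ j, qPow q (F.z j) μ)

/-- f and g have a nonconstant common q-divisor. -/
def HasCommonQDivisor (q : ℂ) (f g : Polynomial ℂ) : Prop :=
  ∃ (z₀ z₁ z₂ : ℂ) (m n : ℕ) (F G : Polynomial ℂ), 1 ≤ m ∧ 1 ≤ n ∧
    f = qPow q z₁ m * F ∧ g = qPow q z₂ n * G ∧ (z₀ = z₁ ∨ z₀ = z₂) ∧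
    f * g = qPow q z₀ (m + n) * (F * G)

/-- q-shifted power [P]_q^n(z) = P(z)P(qz)...(P(q^{n-1}z)). -/
def qShiftPow (q : ℂ) (P : Polynomial ℂ) (n : ℕ) : Polynomial ℂ :=
  ∏ i ∈ Finset.range n, P.comp (C (q ^ i) * X)

/-- gcd of a list of polynomials. -/
def gcdList (l : List (Polynomial ℂ)) : Polynomial ℂ := l.foldr EuclideanDomain.gcd 0
namespace QMason

lemma abs_pow_inj {q : ℂ} (hq0 : q ≠ 0) (habs : ‖q‖ ≠ 1) {m n : ℕ}
    (h : q ^ m = q ^ n) : m = n := by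
  have hr0 : 0 < ‖q‖ := by simpa using hq0
  have key : ∀ r : ℝ, 0 < r → 1 < r → r ^ m = r ^ n → m = n := fun r _ hr h' =>
    (pow_right_strictMono₀ hr).injective h'
  have h' : ‖q‖ ^ m = ‖q‖ ^ n := by
    rw [← norm_pow, ← norm_pow, h]
  rcases habs.lt_or_gt with hlt | hgt
  · have h1 : ‖q‖⁻¹ ^ m = ‖q‖⁻¹ ^ n := by
      rw [inv_pow, inv_pow, h']
    exact key _ (by positivity) ((one_lt_inv₀ hr0).mpr hlt) h1
  · exact key _ hr0 hgt h'

lemma qPow_monic (q w : ℂ) (n : ℕ) : (qPow q w n).Monic :=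
  monic_prod_of_monic _ _ fun i _ => monic_X_sub_C _

lemma qPow_one (q w : ℂ) : qPow q w 1 = X - C w := by
  simp [qPow]

lemma qPow_two (q w : ℂ) : qPow q w 2 = (X - C w) * (X - C (q * w)) := by
  rw [qPow, Finset.prod_range_succ, Finset.prod_range_one]
  norm_num

lemma hcd_left (q : ℂ) (f g : Polynomial ℂ) (u : ℂ) (hf : f.eval u = 0)
    (hg : g.eval (q * u) = 0) : HasCommonQDivisor q f g := by
  have hF : (X - C u) * (f /ₘ (X - C u)) = f := mul_divByMonic_eq_iff_isRoot.2 hf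
  have hG : (X - C (q * u)) * (g /ₘ (X - C (q * u))) = g := mul_divByMonic_eq_iff_isRoot.2 hg
  refine ⟨u, u, q * u, 1, 1, f /ₘ (X - C u), g /ₘ (X - C (q * u)), le_rfl, le_rfl, ?_, ?_,
    Or.inl rfl, ?_⟩
  · rw [qPow_one, hF]
  · rw [qPow_one, hG]
  · conv_lhs => rw [← hF, ← hG]
    rw [qPow_two]; ring

lemma hcd_right (q : ℂ) (f g : Polynomial ℂ) (u : ℂ) (hf : f.eval (q * u) = 0)
    (hg : g.eval u = 0) : HasCommonQDivisor q f g := by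
  have hF : (X - C (q * u)) * (f /ₘ (X - C (q * u))) = f := mul_divByMonic_eq_iff_isRoot.2 hf
  have hG : (X - C u) * (g /ₘ (X - C u)) = g := mul_divByMonic_eq_iff_isRoot.2 hg
  refine ⟨u, q * u, u, 1, 1, f /ₘ (X - C (q * u)), g /ₘ (X - C u), le_rfl, le_rfl, ?_, ?_,
    Or.inr rfl, ?_⟩
  · rw [qPow_one, hF]
  · rw [qPow_one, hG]
  · conv_lhs => rw [← hF, ← hG]
    rw [qPow_two]; ring

lemma dvd_comp {q : ℂ} (u : ℂ) (f : Polynomial ℂ) (d : ℕ)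
    (h : (X - C (q * u)) ^ d ∣ f) : (X - C u) ^ d ∣ f.comp (C q * X) := by
  obtain ⟨g, hg⟩ := h
  have : f.comp (C q * X) = (X - C u) ^ d * ((C q) ^ d * g.comp (C q * X)) := by
    rw [hg, mul_comp, pow_comp, sub_comp, X_comp, C_comp]
    have h2 : C q * X - C (q * u) = C q * (X - C u) := by rw [C_mul]; ring
    rw [h2, mul_pow]; ring
  exact ⟨_, this⟩

lemma rm_W_ge {q : ℂ} (W f h : Polynomial ℂ) (hW : W ≠ 0) (u : ℂ)
    (hrep : W = f * h.comp (C q * X) - f.comp (C q * X) * h ∨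
             W = f.comp (C q * X) * h - f * h.comp (C q * X)) :
    min (rootMultiplicity u f) (rootMultiplicity (q * u) f) ≤ rootMultiplicity u W := by
  set d := min (rootMultiplicity u f) (rootMultiplicity (q * u) f) with hd
  have h1 : (X - C u) ^ d ∣ f :=
    (pow_dvd_pow _ (min_le_left _ _)).trans (pow_rootMultiplicity_dvd f u)
  have h2 : (X - C u) ^ d ∣ f.comp (C q * X) :=
    dvd_comp u f d ((pow_dvd_pow _ (min_le_right _ _)).trans (pow_rootMultiplicity_dvd f (q * u)))
  have hdvd : (X - C u) ^ d ∣ W := by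
    rcases hrep with h' | h' <;> rw [h']
    · exact dvd_sub (h1.mul_right _) (h2.mul_right _)
    · exact dvd_sub (h2.mul_right _) (h1.mul_right _)
  exact (le_rootMultiplicity_iff hW).2 hdvd

lemma sing_helper {q : ℂ} {x y z : Polynomial ℂ} (u : ℂ)
    (Hyx : ∀ v, ¬(y.eval v = 0 ∧ x.eval (q * v) = 0))
    (Hzx : ∀ v, ¬(z.eval v = 0 ∧ x.eval (q * v) = 0))
    (Hxy : ∀ v, ¬(x.eval v = 0 ∧ y.eval (q * v) = 0))
    (Hxz : ∀ v, ¬(x.eval v = 0 ∧ z.eval (q * v) = 0))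
    (hu : x.eval u = 0 ∨ y.eval u = 0 ∨ z.eval u = 0)
    (hx : x.eval (q * u) = 0) :
    y.eval u ≠ 0 ∧ z.eval u ≠ 0 ∧ y.eval (q * u) ≠ 0 ∧ z.eval (q * u) ≠ 0 := by
  have hyu : y.eval u ≠ 0 := fun h => Hyx u ⟨h, hx⟩
  have hzu : z.eval u ≠ 0 := fun h => Hzx u ⟨h, hx⟩
  have hxu : x.eval u = 0 := by
    rcases hu with h | h | h
    · exact h
    · exact absurd h hyu
    · exact absurd h hzu
  exact ⟨hyu, hzu, fun h => Hxy u ⟨hxu, h⟩, fun h => Hxz u ⟨hxu, h⟩⟩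

lemma no_two_step {q : ℂ} (hq0 : q ≠ 0) (habs : ‖q‖ ≠ 1)
    (f h : Polynomial ℂ) (hf0 : f ≠ 0) (u : ℂ) (hu : u ≠ 0)
    (hid : f * h.comp (C q * X) = f.comp (C q * X) * h)
    (hcf : ∀ v, ¬(f.eval v = 0 ∧ h.eval (q * v) = 0))
    (h0 : f.eval u = 0) (h1 : f.eval (q * u) = 0) : False := by
  have key : ∀ k : ℕ, f.eval (q ^ k * u) = 0 ∧ f.eval (q ^ (k + 1) * u) = 0 := by
    intro k
    induction k with
    | zero => simpa using ⟨h0, h1⟩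
    | succ k ih =>
      refine ⟨by simpa using ih.2, ?_⟩
      have hev := congrArg (Polynomial.eval (q ^ (k + 1) * u)) hid
      simp only [eval_mul, eval_comp, eval_mul, eval_C, eval_X] at hev
      rw [ih.2] at hev
      have hq2 : q * (q ^ (k + 1) * u) = q ^ (k + 2) * u := by ring
      rw [hq2] at hev
      have hh : h.eval (q ^ (k + 1) * u) ≠ 0 := by
        intro hh0
        exact hcf (q ^ k * u) ⟨ih.1, by rw [show q * (q ^ k * u) = q ^ (k + 1) * u by ring]; exact hh0⟩
      have := hev.symm
      rw [zero_mul] at this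
      rcases mul_eq_zero.mp this with h' | h'
      · exact h'
      · exact absurd h' hh
  apply hf0
  apply Polynomial.eq_zero_of_infinite_isRoot
  apply Set.infinite_of_injective_forall_mem (f := fun k : ℕ => q ^ k * u)
  · intro k l hkl
    exact abs_pow_inj hq0 habs (mul_right_cancel₀ hu hkl)
  · intro k
    exact (key k).1

lemma range_map_succ_le (n : ℕ) (hn : 1 ≤ n) :
    (Multiset.range (n - 1)).map Nat.succ ≤ Multiset.range n := by
  obtain ⟨m, rfl⟩ : ∃ m, n = m + 1 := ⟨n - 1, (Nat.succ_pred_eq_of_pos hn).symm⟩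
  simp only [Nat.add_sub_cancel]
  have hlist : (Multiset.range (m + 1)) = (0 : ℕ) ::ₘ (Multiset.range m).map Nat.succ := by
    have : List.range (m + 1) = 0 :: List.map Nat.succ (List.range m) := List.range_succ_eq_map
    exact congrArg (fun l : List ℕ => (l : Multiset ℕ)) this
  rw [hlist]
  exact Multiset.le_cons_self _ _

lemma range_le_range {m n : ℕ} (h : m ≤ n) : Multiset.range m ≤ Multiset.range n :=
  Multiset.coe_le.mpr (List.range_sublist.2 h).subperm

lemma rm_le_natDegree {f : Polynomial ℂ} (hf : f ≠ 0) (x : ℂ) :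
    rootMultiplicity x f ≤ f.natDegree := by
  have := Polynomial.natDegree_le_of_dvd (pow_rootMultiplicity_dvd f x) hf
  simpa [natDegree_pow] using this


lemma deg_eq_of_comm {q : ℂ} (hq0 : q ≠ 0) (habs : ‖q‖ ≠ 1)
    {f g : Polynomial ℂ} (hf : f ≠ 0) (hg : g ≠ 0)
    (h : f * g.comp (C q * X) = f.comp (C q * X) * g) : f.natDegree = g.natDegree := by
  have hC : (C q * X).natDegree ≠ 0 := by
    rw [natDegree_C_mul_X q hq0]; exact one_ne_zero
  have hlcq : (C q * X).leadingCoeff = q := by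
    rw [leadingCoeff_mul, leadingCoeff_C, leadingCoeff_X, mul_one]
  have hlc := congrArg leadingCoeff h
  rw [leadingCoeff_mul, leadingCoeff_mul, leadingCoeff_comp hC, leadingCoeff_comp hC, hlcq] at hlc
  have hf' : f.leadingCoeff ≠ 0 := leadingCoeff_ne_zero.mpr hf
  have hg' : g.leadingCoeff ≠ 0 := leadingCoeff_ne_zero.mpr hg
  have h3 : q ^ g.natDegree = q ^ f.natDegree := by
    have h4 : f.leadingCoeff * g.leadingCoeff * q ^ g.natDegree
        = f.leadingCoeff * g.leadingCoeff * q ^ f.natDegree := by linear_combination hlc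
    exact mul_left_cancel₀ (mul_ne_zero hf' hg') h4
  exact (abs_pow_inj hq0 habs h3).symm

lemma count_zero_R {q : ℂ} (hq0 : q ≠ 0) (z : ℂ) (n : ℕ) [DecidableEq ℂ] :
    Multiset.count 0 ((Multiset.range n).map (fun i => q ^ i * z)) = if z = 0 then n else 0 := by
  by_cases hz : z = 0
  · rw [if_pos hz, hz]
    simp [Multiset.map_const']
  · rw [if_neg hz, Multiset.count_eq_zero]
    intro hmem
    obtain ⟨i, _, hi⟩ := Multiset.mem_map.mp hmem
    exact (mul_ne_zero (pow_ne_zero _ hq0) hz) hi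

lemma count_LR {q z : ℂ} (u : ℂ) (n : ℕ) [DecidableEq ℂ] :
    Multiset.count u ((Multiset.range (n - 1)).map (fun i => q ^ i * z)) ≤
      Multiset.count u ((Multiset.range n).map (fun i => q ^ i * z)) :=
  Multiset.count_le_of_le _ (Multiset.map_le_map (range_le_range (Nat.sub_le _ _)))

lemma count_LR_shift {q z : ℂ} (hq0 : q ≠ 0) (u : ℂ) {n : ℕ} (hn : 1 ≤ n) [DecidableEq ℂ] :
    Multiset.count u ((Multiset.range (n - 1)).map (fun i => q ^ i * z)) ≤
      Multiset.count (q * u) ((Multiset.range n).map (fun i => q ^ i * z)) := by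
  have h1 : Multiset.count u ((Multiset.range (n - 1)).map (fun i => q ^ i * z))
      = Multiset.count (q * u)
        ((((Multiset.range (n - 1)).map (fun i => q ^ i * z))).map (fun x => q * x)) :=
    (Multiset.count_map_eq_count' _ _ (mul_right_injective₀ hq0) u).symm
  rw [h1]
  apply Multiset.count_le_of_le
  have h2 : (((Multiset.range (n - 1)).map (fun i => q ^ i * z))).map (fun x => q * x)
      = ((Multiset.range (n - 1)).map Nat.succ).map (fun i => q ^ i * z) := by
    rw [Multiset.map_map, Multiset.map_map]
    congr 1
    funext i
    show q * (q ^ i * z) = q ^ (i + 1) * z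
    ring
  rw [h2]
  exact Multiset.map_le_map (range_map_succ_le _ hn)

end QMason


set_option maxHeartbeats 1000000 in
/-- q-difference Stothers–Mason theorem. -/
theorem q_stothers_mason (q : ℂ) (hq0 : q ≠ 0) (habs : ‖q‖ ≠ 1)
    (a b c : Polynomial ℂ)
    (hab : ¬ HasCommonQDivisor q a b) (hac : ¬ HasCommonQDivisor q a c)
    (hbc : ¬ HasCommonQDivisor q b c)
    (hsum : a + b = c)
    (hconst : ¬ (a.natDegree = 0 ∧ b.natDegree = 0 ∧ c.natDegree = 0)) :
    ∀ F : QFactorization q (a * b * c),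
      max (max a.natDegree b.natDegree) c.natDegree + 1 ≤ (radQ F).natDegree := by
  intro F
  classical
  have hprod_ne : (∏ j, qPow q (F.z j) (F.n j)) ≠ 0 :=
    (monic_prod_of_monic _ _ fun j _ => QMason.qPow_monic q (F.z j) (F.n j)).ne_zero
  have hPne : a * b * c ≠ 0 := by
    rw [F.eq]
    exact mul_ne_zero (by simpa using F.A_ne) hprod_ne
  have ha : a ≠ 0 := fun h => hPne (by rw [h, zero_mul, zero_mul])
  have hb : b ≠ 0 := fun h => hPne (by rw [h, mul_zero, zero_mul])
  have hc : c ≠ 0 := fun h => hPne (by rw [h, mul_zero])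
  have hab0 : a * b ≠ 0 := mul_ne_zero ha hb
  have hdsum : (a * b * c).natDegree = a.natDegree + b.natDegree + c.natDegree := by
    rw [natDegree_mul hab0 hc, natDegree_mul ha hb]
  have hrm3 : ∀ u : ℂ, rootMultiplicity u (a * b * c)
      = rootMultiplicity u a + rootMultiplicity u b + rootMultiplicity u c := fun u => by
    rw [rootMultiplicity_mul hPne, rootMultiplicity_mul hab0]
  have hrad : (radQ F).natDegree = F.N := by
    simp only [radQ]
    rw [natDegree_prod _ _ fun j _ => X_sub_C_ne_zero (F.z j)]
    simp [natDegree_X_sub_C]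
  rw [hrad]
  -- coprimality: no q-chain can pass from one of a,b,c to another
  have cf_ab : ∀ v : ℂ, ¬(a.eval v = 0 ∧ b.eval (q * v) = 0) :=
    fun v h => hab (QMason.hcd_left q a b v h.1 h.2)
  have cf_ba : ∀ v : ℂ, ¬(b.eval v = 0 ∧ a.eval (q * v) = 0) :=
    fun v h => hab (QMason.hcd_right q a b v h.2 h.1)
  have cf_ac : ∀ v : ℂ, ¬(a.eval v = 0 ∧ c.eval (q * v) = 0) :=
    fun v h => hac (QMason.hcd_left q a c v h.1 h.2)
  have cf_ca : ∀ v : ℂ, ¬(c.eval v = 0 ∧ a.eval (q * v) = 0) :=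
    fun v h => hac (QMason.hcd_right q a c v h.2 h.1)
  have cf_bc : ∀ v : ℂ, ¬(b.eval v = 0 ∧ c.eval (q * v) = 0) :=
    fun v h => hbc (QMason.hcd_left q b c v h.1 h.2)
  have cf_cb : ∀ v : ℂ, ¬(c.eval v = 0 ∧ b.eval (q * v) = 0) :=
    fun v h => hbc (QMason.hcd_right q b c v h.2 h.1)
  -- multiset of roots of a*b*c coming from the factorization
  have hqPow_roots : ∀ (w : ℂ) (n : ℕ),
      (qPow q w n).roots = (Multiset.range n).map (fun i => q ^ i * w) := by
    intro w n
    have h0 : qPow q w n = ∏ i ∈ Finset.range n, (X - C (q ^ i * w)) := rfl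
    have hne : (∏ i ∈ Finset.range n, (X - C (q ^ i * w))) ≠ 0 :=
      Finset.prod_ne_zero_iff.mpr fun i _ => X_sub_C_ne_zero _
    rw [h0, roots_prod _ _ hne]
    simp only [roots_X_sub_C]
    rw [Multiset.bind_singleton, Finset.range_val]
  have hProots : (a * b * c).roots
      = Finset.univ.val.bind
          (fun j => (Multiset.range (F.n j)).map (fun i => q ^ i * F.z j)) := by
    conv_lhs => rw [F.eq]
    rw [roots_C_mul _ F.A_ne, roots_prod _ _ hprod_ne]
    simp only [hqPow_roots]
  have hcount : ∀ u : ℂ,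
      (∑ j : Fin F.N,
        Multiset.count u ((Multiset.range (F.n j)).map (fun i => q ^ i * F.z j)))
        = rootMultiplicity u (a * b * c) := by
    intro u
    rw [← count_roots, hProots, Multiset.count_bind]
    rfl
  have hS0R : (∑ j : Fin F.N,
      Multiset.count 0 ((Multiset.range (F.n j)).map (fun i => q ^ i * F.z j)))
      = ∑ j ∈ Finset.univ.filter (fun j => F.z j = 0), F.n j := by
    rw [Finset.sum_filter]
    exact Finset.sum_congr rfl fun j _ => QMason.count_zero_R hq0 (F.z j) (F.n j)
  have hS0L : (∑ j : Fin F.N,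
      Multiset.count 0 ((Multiset.range (F.n j - 1)).map (fun i => q ^ i * F.z j)))
      = ∑ j ∈ Finset.univ.filter (fun j => F.z j = 0), (F.n j - 1) := by
    rw [Finset.sum_filter]
    exact Finset.sum_congr rfl fun j _ => QMason.count_zero_R hq0 (F.z j) (F.n j - 1)
  have hS0val : ∑ j ∈ Finset.univ.filter (fun j => F.z j = 0), F.n j
      = rootMultiplicity 0 (a * b * c) := by rw [← hS0R, hcount 0]
  -- the q-Wronskian
  set W : Polynomial ℂ := a * b.comp (C q * X) - a.comp (C q * X) * b with hWdef
  have hWac : a * c.comp (C q * X) - a.comp (C q * X) * c = W := by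
    rw [hWdef, ← hsum, add_comp]; ring
  have hWbc : b.comp (C q * X) * c - b * c.comp (C q * X) = W := by
    rw [hWdef, ← hsum, add_comp]; ring
  have hdegcomp : ∀ f : Polynomial ℂ, (f.comp (C q * X)).natDegree = f.natDegree := fun f => by
    rw [natDegree_comp, natDegree_C_mul_X q hq0, mul_one]
  have hWab_deg : W.natDegree ≤ a.natDegree + b.natDegree := by
    rw [hWdef]
    refine (natDegree_sub_le _ _).trans (max_le ?_ ?_)
    · exact natDegree_mul_le.trans (by rw [hdegcomp])
    · exact natDegree_mul_le.trans (by rw [hdegcomp])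
  have hWac_deg : W.natDegree ≤ a.natDegree + c.natDegree := by
    rw [← hWac]
    refine (natDegree_sub_le _ _).trans (max_le ?_ ?_)
    · exact natDegree_mul_le.trans (by rw [hdegcomp])
    · exact natDegree_mul_le.trans (by rw [hdegcomp])
  have hWbc_deg : W.natDegree ≤ b.natDegree + c.natDegree := by
    rw [← hWbc]
    refine (natDegree_sub_le _ _).trans (max_le ?_ ?_)
    · exact natDegree_mul_le.trans (by rw [hdegcomp])
    · exact natDegree_mul_le.trans (by rw [hdegcomp])
  have hdeg_eq : ∑ j, F.n j = a.natDegree + b.natDegree + c.natDegree := F.deg_sum.trans hdsum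
  by_cases hW0 : W = 0
  · -- degenerate branch : W = 0
    have hI1 : a * b.comp (C q * X) = a.comp (C q * X) * b := by
      have h' := hW0
      rw [hWdef] at h'
      exact sub_eq_zero.mp h'
    have hI2 : a * c.comp (C q * X) = a.comp (C q * X) * c := sub_eq_zero.mp (hWac.trans hW0)
    have hI3 : b.comp (C q * X) * c = b * c.comp (C q * X) := sub_eq_zero.mp (hWbc.trans hW0)
    have hdab : a.natDegree = b.natDegree := QMason.deg_eq_of_comm hq0 habs ha hb hI1
    have hdac : a.natDegree = c.natDegree := QMason.deg_eq_of_comm hq0 habs ha hc hI2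
    have hd1 : 1 ≤ a.natDegree := by
      by_contra h
      push_neg at h
      exact hconst ⟨by omega, by omega, by omega⟩
    have hnd : ∀ u : ℂ, u ≠ 0 → (a * b * c).eval u = 0 → (a * b * c).eval (q * u) = 0 →
        False := by
      intro u hu h1 h2
      have h1' : a.eval u = 0 ∨ b.eval u = 0 ∨ c.eval u = 0 := by
        simpa [mul_eq_zero, or_assoc] using h1
      have h2' : a.eval (q * u) = 0 ∨ b.eval (q * u) = 0 ∨ c.eval (q * u) = 0 := by
        simpa [mul_eq_zero, or_assoc] using h2
      rcases h1' with h | h | h <;> rcases h2' with h' | h' | h'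
      · exact QMason.no_two_step hq0 habs a b ha u hu hI1 cf_ab h h'
      · exact cf_ab u ⟨h, h'⟩
      · exact cf_ac u ⟨h, h'⟩
      · exact cf_ba u ⟨h, h'⟩
      · exact QMason.no_two_step hq0 habs b a hb u hu (by linear_combination -hI1) cf_ba h h'
      · exact cf_bc u ⟨h, h'⟩
      · exact cf_ca u ⟨h, h'⟩
      · exact cf_cb u ⟨h, h'⟩
      · exact QMason.no_two_step hq0 habs c b hc u hu (by linear_combination hI3) cf_cb h h'
    have hn1 : ∀ j : Fin F.N, F.z j ≠ 0 → F.n j = 1 := by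
      intro j hz
      by_contra hne
      have h2j : 2 ≤ F.n j := by have := F.n_pos j; omega
      have hdvd : ∀ i, i < F.n j → (X - C (q ^ i * F.z j)) ∣ a * b * c := by
        intro i hi
        conv_rhs => rw [F.eq]
        have hstep1 : (X - C (q ^ i * F.z j)) ∣ qPow q (F.z j) (F.n j) := by
          have h0 : qPow q (F.z j) (F.n j)
              = ∏ k ∈ Finset.range (F.n j), (X - C (q ^ k * F.z j)) := rfl
          rw [h0]
          exact Finset.dvd_prod_of_mem _ (Finset.mem_range.mpr hi)
        have hstep2 : qPow q (F.z j) (F.n j) ∣ ∏ k, qPow q (F.z k) (F.n k) :=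
          Finset.dvd_prod_of_mem _ (Finset.mem_univ j)
        exact (hstep1.trans hstep2).mul_left _
      have he0 : (a * b * c).eval (F.z j) = 0 := by
        refine eval_eq_zero_of_dvd_of_eval_eq_zero (hdvd 0 (by omega)) ?_
        simp
      have he1 : (a * b * c).eval (q * F.z j) = 0 := by
        refine eval_eq_zero_of_dvd_of_eval_eq_zero (hdvd 1 (by omega)) ?_
        simp
      exact hnd (F.z j) hz he0 he1
    have hm0 : rootMultiplicity 0 (a * b * c) ≤ a.natDegree := by
      by_cases hA : a.eval 0 = 0
      · have hB : b.eval 0 ≠ 0 := fun hB => cf_ab 0 ⟨hA, by rwa [mul_zero]⟩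
        have hC : c.eval 0 ≠ 0 := fun hC => cf_ac 0 ⟨hA, by rwa [mul_zero]⟩
        rw [hrm3 0, rootMultiplicity_eq_zero hB, rootMultiplicity_eq_zero hC]
        simpa using QMason.rm_le_natDegree ha 0
      · by_cases hB : b.eval 0 = 0
        · have hC : c.eval 0 ≠ 0 := fun hC => cf_bc 0 ⟨hB, by rwa [mul_zero]⟩
          rw [hrm3 0, rootMultiplicity_eq_zero hA, rootMultiplicity_eq_zero hC, hdab]
          simpa using QMason.rm_le_natDegree hb 0
        · by_cases hC : c.eval 0 = 0
          · rw [hrm3 0, rootMultiplicity_eq_zero hA, rootMultiplicity_eq_zero hB, hdac]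
            simpa using QMason.rm_le_natDegree hc 0
          · rw [hrm3 0, rootMultiplicity_eq_zero hA, rootMultiplicity_eq_zero hB,
              rootMultiplicity_eq_zero hC]
            exact Nat.zero_le _
    have hsplit := Finset.sum_filter_add_sum_filter_not Finset.univ (fun j => F.z j = 0) F.n
    have hones : ∑ j ∈ Finset.univ.filter (fun j => ¬ F.z j = 0), F.n j
        = (Finset.univ.filter (fun j => ¬ F.z j = 0)).card := by
      rw [Finset.card_eq_sum_ones]
      exact Finset.sum_congr rfl fun j hj => hn1 j (Finset.mem_filter.mp hj).2
    have hcardle : (Finset.univ.filter (fun j => ¬ F.z j = 0)).card ≤ F.N := by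
      simpa using Finset.card_filter_le Finset.univ (fun j => ¬ F.z j = 0)
    omega
  · -- main branch : W ≠ 0
    set L : Multiset ℂ :=
      Finset.univ.val.bind
        (fun j => (Multiset.range (F.n j - 1)).map (fun i => q ^ i * F.z j)) with hLdef
    have hcountL : ∀ u : ℂ, Multiset.count u L
        = ∑ j : Fin F.N,
            Multiset.count u ((Multiset.range (F.n j - 1)).map (fun i => q ^ i * F.z j)) := by
      intro u
      rw [hLdef, Multiset.count_bind]
      rfl
    have hmain : (0 ::ₘ L) ≤ W.roots := by
      rw [Multiset.le_iff_count]
      intro u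
      by_cases hu0 : u = 0
      · subst hu0
        rw [Multiset.count_cons_self, count_roots]
        by_cases hz : (a * b * c).eval 0 = 0
        · have h1' : a.eval 0 = 0 ∨ b.eval 0 = 0 ∨ c.eval 0 = 0 := by
            simpa [mul_eq_zero, or_assoc] using hz
          have hkey : rootMultiplicity 0 (a * b * c) ≤ rootMultiplicity 0 W := by
            rcases h1' with h | h | h
            · obtain ⟨hbu, hcu, _, _⟩ :=
                QMason.sing_helper 0 cf_ba cf_ca cf_ab cf_ac (Or.inl h) (by rwa [mul_zero])
              have hge := QMason.rm_W_ge W a b hW0 0 (Or.inl hWdef)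
              rw [mul_zero, min_self] at hge
              have h3 := hrm3 0
              have hz1 : rootMultiplicity 0 b = 0 := rootMultiplicity_eq_zero hbu
              have hz2 : rootMultiplicity 0 c = 0 := rootMultiplicity_eq_zero hcu
              omega
            · obtain ⟨hau, hcu, _, _⟩ :=
                QMason.sing_helper 0 cf_ab cf_cb cf_ba cf_bc
                  (Or.inl h) (by rwa [mul_zero])
              have hge := QMason.rm_W_ge W b a hW0 0 (Or.inr (by rw [hWdef]; ring))
              rw [mul_zero, min_self] at hge
              have h3 := hrm3 0
              have hz1 : rootMultiplicity 0 a = 0 := rootMultiplicity_eq_zero hau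
              have hz2 : rootMultiplicity 0 c = 0 := rootMultiplicity_eq_zero hcu
              omega
            · obtain ⟨hau, hbu, _, _⟩ :=
                QMason.sing_helper 0 cf_ac cf_bc cf_ca cf_cb
                  (Or.inl h) (by rwa [mul_zero])
              have hge := QMason.rm_W_ge W c b hW0 0 (Or.inl (by rw [← hWbc]; ring))
              rw [mul_zero, min_self] at hge
              have h3 := hrm3 0
              have hz1 : rootMultiplicity 0 a = 0 := rootMultiplicity_eq_zero hau
              have hz2 : rootMultiplicity 0 b = 0 := rootMultiplicity_eq_zero hbu
              omega
          have hpos : 0 < rootMultiplicity 0 (a * b * c) := (rootMultiplicity_pos hPne).2 hz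
          have hsum0 : (∑ j ∈ Finset.univ.filter (fun j => F.z j = 0), (F.n j - 1))
              + (Finset.univ.filter (fun j => F.z j = 0)).card
              = ∑ j ∈ Finset.univ.filter (fun j => F.z j = 0), F.n j := by
            rw [Finset.card_eq_sum_ones, ← Finset.sum_add_distrib]
            exact Finset.sum_congr rfl fun j _ => by have := F.n_pos j; omega
          have hcardpos : 0 < (Finset.univ.filter (fun j => F.z j = 0)).card := by
            rcases Nat.eq_zero_or_pos (Finset.univ.filter (fun j => F.z j = 0)).card
              with h0 | h0
            · rw [Finset.card_eq_zero] at h0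
              rw [h0, Finset.sum_empty] at hS0val
              omega
            · exact h0
          have hcl := (hcountL 0).trans hS0L
          omega
        · have hrm0 : rootMultiplicity 0 (a * b * c) = 0 := rootMultiplicity_eq_zero hz
          have hcl : Multiset.count 0 L = 0 := by
            have h1 := (hcountL 0).trans hS0L
            have h2 : (∑ j ∈ Finset.univ.filter (fun j => F.z j = 0), (F.n j - 1))
                ≤ ∑ j ∈ Finset.univ.filter (fun j => F.z j = 0), F.n j :=
              Finset.sum_le_sum fun j _ => Nat.sub_le _ _
            omega
          rw [hcl]
          have hW00 : W.IsRoot 0 := by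
            rw [hWdef]
            simp [IsRoot, eval_comp]
          exact (rootMultiplicity_pos hW0).2 hW00
      · rw [Multiset.count_cons_of_ne hu0, count_roots]
        by_cases hcl : Multiset.count u L = 0
        · rw [hcl]; exact Nat.zero_le _
        · have hclpos : 0 < Multiset.count u L := Nat.pos_of_ne_zero hcl
          have hcu : Multiset.count u L ≤ rootMultiplicity u (a * b * c) := by
            rw [hcountL u, ← hcount u]
            exact Finset.sum_le_sum fun j _ => QMason.count_LR u (F.n j)
          have hcqu : Multiset.count u L ≤ rootMultiplicity (q * u) (a * b * c) := by
            rw [hcountL u, ← hcount (q * u)]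
            exact Finset.sum_le_sum fun j _ => QMason.count_LR_shift hq0 u (F.n_pos j)
          have hu_root : (a * b * c).IsRoot u := (rootMultiplicity_pos hPne).1 (by omega)
          have hqu_root : (a * b * c).IsRoot (q * u) := (rootMultiplicity_pos hPne).1 (by omega)
          have h1' : a.eval u = 0 ∨ b.eval u = 0 ∨ c.eval u = 0 := by
            simpa [IsRoot, mul_eq_zero, or_assoc] using hu_root
          have h2' : a.eval (q * u) = 0 ∨ b.eval (q * u) = 0 ∨ c.eval (q * u) = 0 := by
            simpa [IsRoot, mul_eq_zero, or_assoc] using hqu_root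
          have h3u := hrm3 u
          have h3qu := hrm3 (q * u)
          rcases h2' with h' | h' | h'
          · obtain ⟨hbu, hcu', hbq, hcq⟩ :=
              QMason.sing_helper u cf_ba cf_ca cf_ab cf_ac h1' h'
            have hge := QMason.rm_W_ge W a b hW0 u (Or.inl hWdef)
            have e1 : rootMultiplicity u b = 0 := rootMultiplicity_eq_zero hbu
            have e2 : rootMultiplicity u c = 0 := rootMultiplicity_eq_zero hcu'
            have e3 : rootMultiplicity (q * u) b = 0 := rootMultiplicity_eq_zero hbq
            have e4 : rootMultiplicity (q * u) c = 0 := rootMultiplicity_eq_zero hcq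
            omega
          · obtain ⟨hau, hcu', haq, hcq⟩ :=
              QMason.sing_helper u cf_ab cf_cb cf_ba cf_bc
                (h1'.elim (fun h => Or.inr (Or.inl h))
                  (fun h => h.elim Or.inl (fun h => Or.inr (Or.inr h)))) h'
            have hge := QMason.rm_W_ge W b a hW0 u (Or.inr (by rw [hWdef]; ring))
            have e1 : rootMultiplicity u a = 0 := rootMultiplicity_eq_zero hau
            have e2 : rootMultiplicity u c = 0 := rootMultiplicity_eq_zero hcu'
            have e3 : rootMultiplicity (q * u) a = 0 := rootMultiplicity_eq_zero haq
            have e4 : rootMultiplicity (q * u) c = 0 := rootMultiplicity_eq_zero hcq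
            omega
          · obtain ⟨hau, hbu, haq, hbq⟩ :=
              QMason.sing_helper u cf_ac cf_bc cf_ca cf_cb
                (h1'.elim (fun h => Or.inr (Or.inl h))
                  (fun h => h.elim (fun h => Or.inr (Or.inr h)) Or.inl)) h'
            have hge := QMason.rm_W_ge W c b hW0 u (Or.inl (by rw [← hWbc]; ring))
            have e1 : rootMultiplicity u a = 0 := rootMultiplicity_eq_zero hau
            have e2 : rootMultiplicity u b = 0 := rootMultiplicity_eq_zero hbu
            have e3 : rootMultiplicity (q * u) a = 0 := rootMultiplicity_eq_zero haq
            have e4 : rootMultiplicity (q * u) b = 0 := rootMultiplicity_eq_zero hbq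
            omega
    have hcard := Multiset.card_le_card hmain
    rw [Multiset.card_cons] at hcard
    have hWroots := W.card_roots'
    have hcardL : Multiset.card L = ∑ j, (F.n j - 1) := by
      rw [hLdef, Multiset.card_bind]
      have h1 : (Multiset.map (Multiset.card ∘ fun j =>
            (Multiset.range (F.n j - 1)).map (fun i => q ^ i * F.z j)) Finset.univ.val).sum
          = ∑ j : Fin F.N,
              Multiset.card ((Multiset.range (F.n j - 1)).map (fun i => q ^ i * F.z j)) := rfl
      rw [h1]
      exact Finset.sum_congr rfl fun j _ => by rw [Multiset.card_map, Multiset.card_range]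
    have hsum1 : ∑ j, (F.n j - 1) + F.N = ∑ j, F.n j := by
      have h1 : ∑ j : Fin F.N, F.n j = ∑ j : Fin F.N, ((F.n j - 1) + 1) :=
        Finset.sum_congr rfl fun j _ => by have := F.n_pos j; omega
      have h2 : ∑ _j : Fin F.N, (1 : ℕ) = F.N := by simp
      rw [h1, Finset.sum_add_distrib, h2]
    omega
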